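/- arXiv:1202.6604 — 3 statements merged into one kernel-verified Lean document; each statement's English description precedes it below -/
import Mathlib

section
/- Let k ⊂ E be a finite extension of fields and let V, W be k-vector subspaces of E of codimension 1. Then there exists α ∈ E^* such that αV = W. -/
open Module LinearMap

/-- A codimension-one subspace is the kernel of a linear functional. -/
lemma aux_ker_of_codim_one {k E : Type*} [Field k] [AddCommGroup E] [Module k E]
    [FiniteDimensional k E] (V : Submodule k E)
    (hV : Module.finrank k V + 1 = Module.finrank k E) :
    ∃ φ : E →ₗ[k] k, LinearMap.ker φ = V := by
  have hq : Module.finrank k (E ⧸ V) = 1 := by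
    have := Submodule.finrank_quotient_add_finrank V
    omega
  have e : (E ⧸ V) ≃ₗ[k] k := LinearEquiv.ofFinrankEq _ _ (by simp [hq])
  refine ⟨e.toLinearMap ∘ₗ V.mkQ, ?_⟩
  rw [LinearMap.ker_comp, LinearEquiv.ker, Submodule.comap_bot, Submodule.ker_mkQ]



/-- Let `k ⊂ E` be a finite extension of fields and let `V, W` be
`k`-vector subspaces of `E` of codimension 1.  Then there exists `α ∈ Eˣ` such that
`α • V = W`. -/
theorem stmt_9 (k E : Type*) [Field k] [Field E] [Algebra k E] [FiniteDimensional k E]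
    (V W : Submodule k E)
    (hV : Module.finrank k V + 1 = Module.finrank k E)
    (hW : Module.finrank k W + 1 = Module.finrank k E) :
    ∃ α : Eˣ, V.map (LinearMap.mulLeft k (α : E)) = W := by
  classical
  obtain ⟨T, hkerT⟩ := aux_ker_of_codim_one V hV
  obtain ⟨ψ, hkerψ⟩ := aux_ker_of_codim_one W hW
  have hVne : V ≠ ⊤ := by
    intro h
    rw [h, finrank_top] at hV
    omega
  have hWne : W ≠ ⊤ := by
    intro h
    rw [h, finrank_top] at hW
    omega
  -- the map β ↦ (x ↦ T (β * x))
  let L : E →ₗ[k] Module.Dual k E :=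
    { toFun := fun β => T ∘ₗ LinearMap.mulLeft k β
      map_add' := by intro a b; ext x; simp [add_mul]
      map_smul' := by intro c a; ext x; simp only [LinearMap.comp_apply, LinearMap.mulLeft_apply, LinearMap.smul_apply,
          RingHom.id_apply, smul_mul_assoc, map_smul] }
  have hLapp : ∀ (β x : E), L β x = T (β * x) := fun β x => rfl
  have hLinj : Function.Injective L := by
    rw [injective_iff_map_eq_zero]
    intro β hβ
    by_contra hβ0
    have hT0 : T = 0 := by
      ext y
      have h1 : L β (β⁻¹ * y) = 0 := by rw [hβ]; rfl
      rw [hLapp, ← mul_assoc, mul_inv_cancel₀ hβ0, one_mul] at h1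
      simpa using h1
    apply hVne
    rw [← hkerT, hT0, LinearMap.ker_zero]
  have hLsurj : Function.Surjective L :=
    (LinearMap.injective_iff_surjective_of_finrank_eq_finrank
      (Subspace.dual_finrank_eq).symm).mp hLinj
  obtain ⟨β, hβ⟩ := hLsurj T
  obtain ⟨γ, hγ⟩ := hLsurj ψ
  have hβ0 : β ≠ 0 := by
    rintro rfl
    apply hVne
    rw [← hkerT, ← hβ]
    simp [L]
  have hγ0 : γ ≠ 0 := by
    rintro rfl
    apply hWne
    rw [← hkerψ, ← hγ]
    simp [L]
  refine ⟨Units.mk0 (β / γ) (div_ne_zero hβ0 hγ0), ?_⟩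
  have hmemV : ∀ x : E, x ∈ V ↔ T (β * x) = 0 := by
    intro x
    have h := DFunLike.congr_fun hβ x
    rw [← hkerT, LinearMap.mem_ker, ← h]
    exact Iff.rfl
  have hmemW : ∀ x : E, x ∈ W ↔ T (γ * x) = 0 := by
    intro x
    have h := DFunLike.congr_fun hγ x
    rw [← hkerψ, LinearMap.mem_ker, ← h]
    exact Iff.rfl
  ext x
  simp only [Submodule.mem_map, LinearMap.mulLeft_apply, Units.val_mk0]
  constructor
  · rintro ⟨v, hv, rfl⟩
    rw [hmemW]
    rw [hmemV] at hv
    have : γ * (β / γ * v) = β * v := by field_simp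
    rw [this, hv]
  · intro hx
    refine ⟨γ / β * x, ?_, ?_⟩
    · rw [hmemV]
      have : β * (γ / β * x) = γ * x := by field_simp
      rw [this]
      exact (hmemW x).mp hx
    · field_simp
end

section
/- Let k ⊂ F be fields of characteristic p > 0 with F^p ⊂ k, let L be a finite separable extension of k contained in a fixed algebraic closure of F, and put L' = L·F. Then the canonical homomorphism Ω^i_{L'|k} → Ω^i_{L'|L} is an isomorphism of L'-vector spaces for all i ≥ 0. -/
/-- Let `k ⊂ F` be fields of characteristic `p > 0` with
`F^p ⊆ k`, let `L` be a finite separable extension of `k`, and let `L' = L·F` be the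
compositum (an extension of both `L` and `F`, generated by their images).  Then the
canonical homomorphism `Ω^i_{L'|k} → Ω^i_{L'|L}` is an isomorphism of `L'`-vector
spaces for all `i ≥ 0`; equivalently, the algebra map induced by
`Ω¹_{L'|k} → Ω¹_{L'|L}` restricts to a bijection `⋀^i Ω¹_{L'|k} → ⋀^i Ω¹_{L'|L}`. -/
theorem stmt_14 (p : ℕ) [Fact p.Prime]
    (k F L L' : Type*) [Field k] [Field F] [Field L] [Field L']
    [Algebra k F] [Algebra k L] [Algebra k L'] [Algebra F L'] [Algebra L L']
    [IsScalarTower k F L'] [IsScalarTower k L L']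
    [CharP F p] (hFp : ∀ x : F, ∃ y : k, algebraMap k F y = x ^ p)
    [FiniteDimensional k L] [Algebra.IsSeparable k L]
    (hcomp : ∀ x : L', x ∈ Subfield.closure
      (Set.range (algebraMap F L') ∪ Set.range (algebraMap L L'))) :
    ∀ i : ℕ,
      Set.BijOn (ExteriorAlgebra.map (KaehlerDifferential.map k L L' L'))
        ↑(⋀[L']^i (Ω[L'⁄k])) ↑(⋀[L']^i (Ω[L'⁄L])) := by
  -- The map `f : Ω[L'⁄k] → Ω[L'⁄L]` is bijective.
  set f := KaehlerDifferential.map k L L' L' with hf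
  have hsurj : Function.Surjective f := KaehlerDifferential.map_surjective k L L'
  have hinj : Function.Injective f := by
    rw [← LinearMap.ker_eq_bot, ← KaehlerDifferential.range_mapBaseChange]
    -- `Ω[L⁄k]` is trivial since `L/k` is separable algebraic.
    have hD : ∀ x : L, KaehlerDifferential.D k L x = 0 := by
      intro x
      have hx : IsIntegral k x := IsIntegral.of_finite k x
      have h1 : (KaehlerDifferential.D k L) (Polynomial.aeval x (minpoly k x)) =
          Polynomial.aeval x (Polynomial.derivative (minpoly k x)) •
            (KaehlerDifferential.D k L) x :=
        Derivation.map_aeval _ _ _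
      rw [minpoly.aeval, map_zero] at h1
      have h2 : Polynomial.aeval x (Polynomial.derivative (minpoly k x)) ≠ 0 :=
        (Algebra.IsSeparable.isSeparable k x).aeval_derivative_ne_zero (minpoly.aeval k x)
      rcases smul_eq_zero.mp h1.symm with h | h
      · exact absurd h h2
      · exact h
    haveI : Subsingleton (Ω[L⁄k]) := by
      have htop : (⊤ : Submodule L (Ω[L⁄k])) = ⊥ := by
        rw [← KaehlerDifferential.span_range_derivation k L, eq_bot_iff, Submodule.span_le]
        rintro _ ⟨x, rfl⟩
        simp [hD x]
      constructor
      intro a b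
      have ha : a ∈ (⊥ : Submodule L (Ω[L⁄k])) := htop ▸ Submodule.mem_top
      have hb : b ∈ (⊥ : Submodule L (Ω[L⁄k])) := htop ▸ Submodule.mem_top
      rw [Submodule.mem_bot] at ha hb
      rw [ha, hb]
    haveI : Subsingleton (TensorProduct L L' (Ω[L⁄k])) := by
      constructor
      intro a b
      have h0 : ∀ x : TensorProduct L L' (Ω[L⁄k]), x = 0 := by
        intro x
        induction x with
        | zero => rfl
        | tmul x y => rw [Subsingleton.elim y 0, TensorProduct.tmul_zero]
        | add x y hx hy => rw [hx, hy, add_zero]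
      rw [h0 a, h0 b]
    rw [eq_bot_iff]
    rintro _ ⟨x, rfl⟩
    rw [Subsingleton.elim x 0, map_zero]
    exact Submodule.zero_mem ⊥
  -- The induced map on exterior algebras.
  set φ := ExteriorAlgebra.map f with hφ
  have hφinj : Function.Injective φ := by
    apply ExteriorAlgebra.map_injective
    exact ⟨(LinearEquiv.ofBijective f ⟨hinj, hsurj⟩).symm.toLinearMap,
      LinearMap.ext fun x => (LinearEquiv.ofBijective f ⟨hinj, hsurj⟩).symm_apply_apply x⟩
  intro i
  -- Image of the exterior power submodule.
  have himg : Submodule.map φ.toLinearMap (⋀[L']^i (Ω[L'⁄k])) = ⋀[L']^i (Ω[L'⁄L]) := by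
    rw [Submodule.map_pow, ExteriorAlgebra.ι_range_map_map,
      LinearMap.range_eq_top.mpr hsurj, Submodule.map_top]
  refine ⟨?_, ?_, ?_⟩
  · intro x hx
    rw [← himg]
    exact ⟨x, hx, rfl⟩
  · intro x _ y _ h
    exact hφinj h
  · intro y hy
    rw [← himg] at hy
    obtain ⟨x, hx, rfl⟩ := hy
    exact ⟨x, hx, rfl⟩
end

section
/- Let F be a field of characteristic p > 0 and let f ∈ F[T_1,...,T_k] be a nonconstant polynomial all of whose exponent vectors are divisible by p (i.e., f = Σ_α c_α T^{pα}). If every ratio c_α/c_β of nonzero coefficients of f lies in F^p, then f = c·g^p for some c ∈ F^* and some nonconstant g ∈ F[T_1,...,T_k]; in particular, f is reducible. Consequently, if X is a geometrically nonreduced, integral affine hypersurface over F, then [N_F(X):F^p] > 1. -/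
open MvPolynomial

/-- An extension `L/F` is separably generated if `L` has a transcendence basis `T`
over `F` such that `L` is separable algebraic over `F(T)`. -/
def IsSeparablyGenerated (F L : Type*) [Field F] [Field L] [Algebra F L] : Prop :=
  ∃ s : Set L, IsTranscendenceBasis F ((↑) : s → L) ∧
    Algebra.IsSeparable (IntermediateField.adjoin F s) L

section Aux

variable {F : Type*} [Field F] {κ : ℕ}

/-- Splitting off the variable `i₀` of a multivariate polynomial ring. -/
noncomputable def Phi (F : Type*) [Field F] {κ : ℕ} (i₀ : Fin κ) :
    MvPolynomial (Fin κ) F ≃ₐ[F] Polynomial (MvPolynomial {j : Fin κ // j ≠ i₀} F) :=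
  (renameEquiv F (Equiv.optionSubtypeNe i₀).symm).trans
    (optionEquivLeft F {j : Fin κ // j ≠ i₀})

theorem Phi_C (i₀ : Fin κ) (a : F) : Phi F i₀ (C a) = Polynomial.C (C a) := by
  simp [Phi, rename_C, optionEquivLeft_C]

theorem Phi_X_self (i₀ : Fin κ) : Phi F i₀ (X i₀) = Polynomial.X := by
  simp [Phi, rename_X, Equiv.optionSubtypeNe_symm_self, optionEquivLeft_X_none]

theorem Phi_X_ne (i₀ : Fin κ) (j : Fin κ) (h : j ≠ i₀) :
    Phi F i₀ (X j) = Polynomial.C (X ⟨j, h⟩) := by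
  simp [Phi, rename_X, Equiv.optionSubtypeNe_symm_of_ne h, optionEquivLeft_X_some]

theorem Phi_rename (i₀ : Fin κ) (q : MvPolynomial {j : Fin κ // j ≠ i₀} F) :
    Phi F i₀ (rename Subtype.val q) = Polynomial.C q := by
  have : ((Phi F i₀).toAlgHom.comp (rename Subtype.val) : MvPolynomial _ F →ₐ[F] _) =
      (Polynomial.CAlgHom : MvPolynomial {j : Fin κ // j ≠ i₀} F →ₐ[F] _) := by
    apply MvPolynomial.algHom_ext
    intro j
    simp only [AlgHom.coe_comp, Function.comp_apply, rename_X, AlgEquiv.toAlgHom_eq_coe,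
      AlgHom.coe_coe, Polynomial.CAlgHom_apply]
    erw [Phi_X_ne i₀ j.1 j.2]
  exact congrArg (fun ψ => ψ q) (congrArg (fun (ψ : _ →ₐ[F] _) => ψ.toFun) this)

theorem Phi_pderiv (i₀ : Fin κ) (q : MvPolynomial (Fin κ) F) :
    Phi F i₀ (pderiv i₀ q) = Polynomial.derivative (Phi F i₀ q) := by
  classical
  induction q using MvPolynomial.induction_on with
  | C a => rw [pderiv_C, map_zero, Phi_C, Polynomial.derivative_C]
  | add q r hq hr => rw [map_add, map_add, map_add, hq, hr, Polynomial.derivative_add]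
  | mul_X q j hq =>
    rw [pderiv_mul, map_add, map_mul, map_mul, map_mul, hq, Polynomial.derivative_mul]
    refine congrArg (HAdd.hAdd _) ?_
    by_cases h : j = i₀
    · subst h
      rw [pderiv_X_self, map_one, mul_one, Phi_X_self, Polynomial.derivative_X, mul_one]
    · rw [pderiv_X_of_ne h, map_zero, mul_zero, Phi_X_ne i₀ j h, Polynomial.derivative_C,
        mul_zero]

theorem Phi_natDegree (i₀ : Fin κ) {f : MvPolynomial (Fin κ) F} {m : Fin κ →₀ ℕ}
    (hm : m ∈ f.support) (hmi : m i₀ ≠ 0) : 1 ≤ (Phi F i₀ f).natDegree := by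
  by_contra h
  have h0 : (Phi F i₀ f).natDegree = 0 := by omega
  obtain ⟨r, hr⟩ := Polynomial.natDegree_eq_zero.mp h0
  have hf : f = rename Subtype.val r := by
    apply (Phi F i₀).injective
    rw [Phi_rename, hr]
  have hvars : i₀ ∈ f.vars := mem_vars i₀ |>.mpr ⟨m, hm, Finsupp.mem_support_iff.mpr hmi⟩
  rw [hf] at hvars
  classical
  obtain ⟨j, _, hj⟩ := Finset.mem_image.mp (vars_rename Subtype.val r hvars)
  exact j.2 hj

theorem pderiv_ne_zero_of_coeff (i₀ : Fin κ) {f : MvPolynomial (Fin κ) F} {m : Fin κ →₀ ℕ}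
    (hm : m ∈ f.support) (hmi : m i₀ ≠ 0) (hmiF : (m i₀ : F) ≠ 0) :
    pderiv i₀ f ≠ 0 := by
  classical
  have hexp : pderiv i₀ f =
      ∑ m' ∈ f.support, monomial (m' - Finsupp.single i₀ 1) (f.coeff m' * m' i₀) := by
    conv_lhs => rw [← support_sum_monomial_coeff f]
    rw [map_sum]
    exact Finset.sum_congr rfl fun _ _ => pderiv_monomial
  have hco : MvPolynomial.coeff (m - Finsupp.single i₀ 1) (pderiv i₀ f) =
      f.coeff m * (m i₀ : F) := by
    rw [hexp, MvPolynomial.coeff_sum]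
    rw [Finset.sum_eq_single m]
    · rw [coeff_monomial, if_pos rfl]
    · intro m' hm' hne
      rw [coeff_monomial]
      split_ifs with heq
      · by_cases h0 : m' i₀ = 0
        · simp [h0]
        · exfalso
          apply hne
          ext i
          have := Finsupp.ext_iff.mp heq i
          simp only [Finsupp.tsub_apply, Finsupp.single_apply] at this
          by_cases hi : i₀ = i
          · subst hi
            simp only [eq_self_iff_true, if_true] at this
            omega
          · simpa [hi] using this
      · rfl
    · intro h; exact absurd hm h
  intro h
  rw [h, MvPolynomial.coeff_zero] at hco
  exact mul_ne_zero (mem_support_iff.mp hm) hmiF hco.symm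

theorem not_dvd_pderiv (i₀ : Fin κ) {f : MvPolynomial (Fin κ) F} {m : Fin κ →₀ ℕ}
    (hm : m ∈ f.support) (hmi : m i₀ ≠ 0) (hmiF : (m i₀ : F) ≠ 0) :
    ¬ f ∣ pderiv i₀ f := by
  intro hdvd
  have hpd : pderiv i₀ f ≠ 0 := pderiv_ne_zero_of_coeff i₀ hm hmi hmiF
  have h1 : (Phi F i₀) f ∣ Polynomial.derivative (Phi F i₀ f) := by
    rw [← Phi_pderiv]
    exact _root_.map_dvd (Phi F i₀).toAlgHom.toRingHom hdvd
  have h2 : Polynomial.derivative (Phi F i₀ f) ≠ 0 := by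
    rw [← Phi_pderiv]
    exact fun h => hpd ((map_eq_zero_iff _ (Phi F i₀).injective).mp h)
  have h3 := Polynomial.natDegree_le_of_dvd h1 h2
  have h4 := Polynomial.natDegree_derivative_lt
    (p := Phi F i₀ f) (by have := Phi_natDegree i₀ hm hmi; omega)
  omega


theorem part1_aux (p : ℕ) [Fact p.Prime] {F : Type*} [Field F] [CharP F p]
    {κ : ℕ} (f : MvPolynomial (Fin κ) F)
    (hnc : ¬ ∃ c : F, f = MvPolynomial.C c)
    (hdvd : ∀ m ∈ f.support, ∀ i : Fin κ, p ∣ m i)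
    (hrat : ∀ m₁ ∈ f.support, ∀ m₂ ∈ f.support, ∃ z : F, f.coeff m₁ / f.coeff m₂ = z ^ p) :
    (∃ (c : F) (g : MvPolynomial (Fin κ) F), c ≠ 0 ∧
        (¬ ∃ c' : F, g = MvPolynomial.C c') ∧ f = MvPolynomial.C c * g ^ p) ∧
      ¬ Irreducible f := by
  classical
  have hp2 : 2 ≤ p := (Fact.out : p.Prime).two_le
  have hf0 : f ≠ 0 := fun h => hnc ⟨0, by simp [h]⟩
  obtain ⟨m₀, hm₀⟩ := (MvPolynomial.support_nonempty (p := f)).mpr hf0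
  set c := f.coeff m₀ with hc_def
  have hc : c ≠ 0 := mem_support_iff.mp hm₀
  have hz' : ∀ m, ∃ z : F, m ∈ f.support → f.coeff m / c = z ^ p := by
    intro m
    by_cases h : m ∈ f.support
    · obtain ⟨z, hz⟩ := hrat m h m₀ hm₀; exact ⟨z, fun _ => hz⟩
    · exact ⟨0, fun h' => absurd h' h⟩
  choose z hz using hz'
  set g : MvPolynomial (Fin κ) F :=
    ∑ m ∈ f.support, monomial (m.mapRange (· / p) (Nat.zero_div p)) (z m) with hg
  have hkey : f = MvPolynomial.C c * g ^ p := by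
    rw [hg, sum_pow_char, Finset.mul_sum]
    conv_lhs => rw [← support_sum_monomial_coeff f]
    refine Finset.sum_congr rfl fun m hm => ?_
    rw [monomial_pow]
    have h1 : p • (m.mapRange (· / p) (Nat.zero_div p)) = m := by
      ext i
      simp only [Finsupp.smul_apply, Finsupp.mapRange_apply, smul_eq_mul]
      exact Nat.mul_div_cancel' (hdvd m hm i)
    rw [h1, C_mul_monomial, ← hz m hm, mul_div_cancel₀ _ hc]
  have hgnc : ¬ ∃ c' : F, g = MvPolynomial.C c' := by
    rintro ⟨c', hgc⟩
    exact hnc ⟨c * c' ^ p, by rw [hkey, hgc, ← C_pow, ← C_mul]⟩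
  refine ⟨⟨c, g, hc, hgnc, hkey⟩, fun hirr => ?_⟩
  have hgU : ¬ IsUnit g := by
    intro hU
    exact hirr.not_isUnit (hkey ▸ ((hc.isUnit.map MvPolynomial.C).mul (hU.pow p)))
  have hfac : f = (MvPolynomial.C c * g ^ (p - 1)) * g := by
    rw [hkey, mul_assoc, ← pow_succ g (p - 1), Nat.sub_add_cancel (by omega)]
  rcases hirr.isUnit_or_isUnit hfac with h | h
  · exact hgU ((isUnit_pow_iff (by omega : p - 1 ≠ 0)).mp (isUnit_of_mul_isUnit_right h))
  · exact hgU h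

set_option synthInstance.maxHeartbeats 1000000 in
set_option maxHeartbeats 2000000 in
theorem sepgen (p : ℕ) [Fact p.Prime] [CharP F p]
    (f : MvPolynomial (Fin κ) F)
    (FX : Type*) [Field FX] [Algebra F FX]
    [Algebra (MvPolynomial (Fin κ) F ⧸ Ideal.span {f}) FX]
    [IsScalarTower F (MvPolynomial (Fin κ) F ⧸ Ideal.span {f}) FX]
    [IsFractionRing (MvPolynomial (Fin κ) F ⧸ Ideal.span {f}) FX]
    (hf : Irreducible f) (i₀ : Fin κ) (m : Fin κ →₀ ℕ) (hm : m ∈ f.support)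
    (hpi : ¬ p ∣ m i₀) : IsSeparablyGenerated F FX := by
  classical
  haveI hprime : (Ideal.span {f} : Ideal (MvPolynomial (Fin κ) F)).IsPrime :=
    (Ideal.span_singleton_prime hf.ne_zero).mpr
      (UniqueFactorizationMonoid.irreducible_iff_prime.mp hf)
  have hmi : m i₀ ≠ 0 := fun h => hpi (h ▸ dvd_zero p)
  have hmiF : ((m i₀ : ℕ) : F) ≠ 0 := fun h => hpi ((CharP.cast_eq_zero_iff F p _).mp h)
  set A := MvPolynomial (Fin κ) F ⧸ Ideal.span {f} with hA
  set φ : MvPolynomial (Fin κ) F →ₐ[F] FX :=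
    (IsScalarTower.toAlgHom F A FX).comp (Ideal.Quotient.mkₐ F (Ideal.span {f})) with hφdef
  have hker : ∀ q, φ q = 0 ↔ f ∣ q := by
    intro q
    have h1 : φ q = algebraMap A FX (Ideal.Quotient.mk (Ideal.span {f}) q) := rfl
    rw [h1, ← map_zero (algebraMap A FX), (IsFractionRing.injective A FX).eq_iff,
      Ideal.Quotient.eq_zero_iff_mem, Ideal.mem_span_singleton]
  set X_ : Fin κ → FX := fun j => φ (X j) with hX_def
  have hφaeval : ∀ q, φ q = aeval X_ q := fun q => congrFun (congrArg _ (aeval_unique φ)) q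
  -- algebraic independence of the other variables
  have hind : AlgebraicIndependent F (fun j : {j : Fin κ // j ≠ i₀} => X_ ↑j) := by
    rw [algebraicIndependent_iff]
    intro q hq
    by_contra hq0
    have h1 : φ (rename Subtype.val q) = 0 := by
      rw [hφaeval, aeval_rename]; exact hq
    have h3 : (Phi F i₀) f ∣ Polynomial.C q := by
      rw [← Phi_rename i₀ q]
      exact _root_.map_dvd (Phi F i₀).toAlgHom.toRingHom ((hker _).mp h1)
    have h4 : (Polynomial.C q : Polynomial (MvPolynomial _ F)) ≠ 0 := by
      simpa using hq0
    have h5 := Polynomial.natDegree_le_of_dvd h3 h4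
    have h6 := Phi_natDegree i₀ hm hmi
    rw [Polynomial.natDegree_C] at h5
    omega
  set s : Set FX := Set.range (fun j : {j : Fin κ // j ≠ i₀} => X_ ↑j) with hs_def
  set L := IntermediateField.adjoin F s with hL_def
  set t : FX := X_ i₀ with ht_def
  have hsmem : ∀ j : {j : Fin κ // j ≠ i₀}, X_ ↑j ∈ L :=
    fun j => IntermediateField.subset_adjoin F s ⟨j, rfl⟩
  set ψ : MvPolynomial {j : Fin κ // j ≠ i₀} F →ₐ[F] L :=
    aeval (fun j => (⟨X_ ↑j, hsmem j⟩ : L)) with hψdef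
  have hψ : ∀ q, (algebraMap L FX) (ψ q) =
      aeval (fun j : {j : Fin κ // j ≠ i₀} => X_ ↑j) q := by
    intro q
    have : ((IsScalarTower.toAlgHom F L FX).comp ψ : MvPolynomial _ F →ₐ[F] FX) =
        aeval (fun j : {j : Fin κ // j ≠ i₀} => X_ ↑j) := by
      apply MvPolynomial.algHom_ext
      intro j
      simp [hψdef]
    exact congrFun (congrArg (fun (ν : _ →ₐ[F] FX) => ⇑ν) this) q
  have hEval : ∀ g : MvPolynomial (Fin κ) F,
      Polynomial.aeval t (((Phi F i₀) g).map (ψ : MvPolynomial _ F →+* L)) = φ g := by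
    intro g
    have key : (((Polynomial.aeval t).restrictScalars F).comp
        ((Polynomial.mapAlgHom ψ).comp (Phi F i₀).toAlgHom)
        : MvPolynomial (Fin κ) F →ₐ[F] FX) = φ := by
      apply MvPolynomial.algHom_ext
      intro j
      simp only [AlgHom.coe_comp, Function.comp_apply, AlgHom.coe_restrictScalars',
        AlgEquiv.toAlgHom_eq_coe, AlgHom.coe_coe]
      by_cases h : j = i₀
      · subst h
        erw [Phi_X_self]
        simp [ht_def]
        rfl
      · erw [Phi_X_ne i₀ j h]
        rw [Polynomial.coe_mapAlgHom, Polynomial.map_C, Polynomial.aeval_C]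
        erw [hψ]
        simp
        rfl
    exact congrFun (congrArg (fun (ν : _ →ₐ[F] FX) => ⇑ν) key) g
  -- separability of t over L
  set q : Polynomial L := ((Phi F i₀) f).map (ψ : MvPolynomial _ F →+* L) with hqdef
  have hq0 : Polynomial.aeval t q = 0 := by
    rw [hqdef, hEval, hker]
  have hq' : Polynomial.aeval t (Polynomial.derivative q) = φ (pderiv i₀ f) := by
    rw [hqdef, Polynomial.derivative_map, ← Phi_pderiv, hEval]
  have hu : φ (pderiv i₀ f) ≠ 0 :=
    fun h => not_dvd_pderiv i₀ hm hmi hmiF ((hker _).mp h)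
  have hqne : q ≠ 0 := by
    intro h
    rw [h, Polynomial.derivative_zero, map_zero] at hq'
    exact hu hq'.symm
  have hint : IsIntegral L t := isAlgebraic_iff_isIntegral.mp ⟨q, hqne, hq0⟩
  have hsep_t : IsSeparable L t := by
    obtain ⟨r, hr⟩ := minpoly.dvd L t hq0
    have hd : Polynomial.derivative (minpoly L t) ≠ 0 := by
      intro h
      apply hu
      rw [← hq', hr, Polynomial.derivative_mul, h, zero_mul, zero_add, map_mul,
        minpoly.aeval, zero_mul]
    exact (Polynomial.separable_iff_derivative_ne_zero (minpoly.irreducible hint)).mpr hd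
  -- FX is generated over L by t
  have hmemT : ∀ g : MvPolynomial (Fin κ) F, φ g ∈ IntermediateField.adjoin L {t} := by
    intro g
    induction g using MvPolynomial.induction_on with
    | C a =>
      have : φ (MvPolynomial.C a) = algebraMap L FX (algebraMap F L a) := by
        rw [← IsScalarTower.algebraMap_apply F L FX]
        simp
      rw [this]
      exact IntermediateField.algebraMap_mem _ _
    | add q r hq hr => rw [map_add]; exact add_mem hq hr
    | mul_X q j hq =>
      rw [map_mul]
      refine mul_mem hq ?_
      by_cases h : j = i₀
      · subst h
        exact IntermediateField.mem_adjoin_simple_self L t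
      · have : φ (X j) = algebraMap L FX ⟨X_ j, hsmem ⟨j, h⟩⟩ := rfl
        rw [this]
        exact IntermediateField.algebraMap_mem _ _
  have htop : IntermediateField.adjoin L {t} = ⊤ := by
    rw [eq_top_iff]
    intro z _
    obtain ⟨a, b, hb, rfl⟩ := IsFractionRing.div_surjective (A := A) z
    obtain ⟨ga, rfl⟩ := Ideal.Quotient.mk_surjective a
    obtain ⟨gb, rfl⟩ := Ideal.Quotient.mk_surjective b
    exact div_mem (hmemT ga) (hmemT gb)
  haveI hLsep : Algebra.IsSeparable L FX := by
    haveI : Algebra.IsSeparable L (IntermediateField.adjoin L {t}) :=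
      (IntermediateField.isSeparable_adjoin_simple_iff_isSeparable L FX).mpr hsep_t
    exact AlgEquiv.Algebra.isSeparable
      ((IntermediateField.equivOfEq htop).trans IntermediateField.topEquiv)
  -- the transcendence basis
  have hcoe : AlgebraicIndependent F ((↑) : s → FX) := hind.coe_range
  refine ⟨s, ⟨hcoe, ?_⟩, hLsep⟩
  intro s' hs' hss'
  rw [Subtype.range_coe] at hss' ⊢
  refine Set.Subset.antisymm hss' fun u hu => ?_
  by_contra hus
  -- u is transcendental over `Algebra.adjoin F s`
  have heq : (((↑) : s' → FX) ∘ (fun o : Option s =>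
      (Option.elim o ⟨u, hu⟩ (fun v => (⟨v.1, hss' v.2⟩ : s')) : s'))) =
      fun o : Option s => o.elim u ((↑) : s → FX) := by
    funext o; cases o <;> rfl
  have helim : Function.Injective (fun o : Option s => o.elim u ((↑) : s → FX)) := by
    intro o₁ o₂ h
    cases o₁ with
    | none =>
      cases o₂ with
      | none => rfl
      | some v =>
        change u = (v : FX) at h
        exact absurd (by rw [h]; exact v.2) hus
    | some v =>
      cases o₂ with
      | none =>
        change (v : FX) = u at h
        exact absurd (by rw [← h]; exact v.2) hus
      | some w =>
        change (v : FX) = (w : FX) at h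
        exact congrArg some (Subtype.ext h)
  have hginj : Function.Injective (fun o : Option s =>
      (Option.elim o ⟨u, hu⟩ (fun v => (⟨v.1, hss' v.2⟩ : s')) : s')) := by
    intro o₁ o₂ h
    apply helim
    exact (congrFun heq o₁).symm.trans ((congrArg Subtype.val h).trans (congrFun heq o₂))
  have hopt : AlgebraicIndependent F (fun o : Option s => o.elim u ((↑) : s → FX)) := by
    have h1 := hs'.comp _ hginj
    rw [← heq]; exact h1
  have htr : Transcendental (Algebra.adjoin F s) u := by
    have h2 := (hcoe.option_iff_transcendental u).mp hopt
    rwa [Subtype.range_coe] at h2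
  -- but u is algebraic over `Algebra.adjoin F s`
  have hR₀L : ∀ {x : FX}, x ∈ Algebra.adjoin F s → x ∈ L :=
    fun hx => IntermediateField.algebra_adjoin_le_adjoin F s hx
  let inc : Algebra.adjoin F s →+* L :=
    { toFun := fun x => ⟨x.1, hR₀L x.2⟩
      map_one' := rfl
      map_mul' := fun _ _ => rfl
      map_zero' := rfl
      map_add' := fun _ _ => rfl }
  letI : Algebra (Algebra.adjoin F s) L := inc.toAlgebra
  haveI : IsScalarTower (Algebra.adjoin F s) L FX :=
    IsScalarTower.of_algebraMap_eq (fun _ => rfl)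
  have haM : ∀ (r : MvPolynomial s F),
      aeval (Subtype.val : s → FX) r ∈ Algebra.adjoin F s := by
    intro r
    have h3 : Algebra.adjoin F s = Algebra.adjoin F (Set.range (Subtype.val : s → FX)) := by
      rw [Subtype.range_coe]
    rw [h3, Algebra.adjoin_range_eq_range_aeval]
    exact ⟨r, rfl⟩
  haveI : IsFractionRing (Algebra.adjoin F s) L := by
    refine ⟨fun y => ?_, fun z => ?_, fun {x y} h => ?_⟩
    · rw [isUnit_iff_ne_zero]
      intro h0
      have h1 : ((y : Algebra.adjoin F s) : FX) = 0 := Subtype.ext_iff.mp h0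
      exact nonZeroDivisors.ne_zero y.2 (Subtype.ext h1)
    · obtain ⟨r, w, hrw⟩ := (IntermediateField.mem_adjoin_iff F (z : FX)).mp z.2
      by_cases hz0 : (z : FX) = 0
      · have hz1 : z = 0 := by apply Subtype.ext; exact hz0
        exact ⟨⟨0, 1⟩, by rw [hz1]; simp⟩
      · have hw0 : aeval (Subtype.val : s → FX) w ≠ 0 := by
          intro h4; rw [h4, div_zero] at hrw; exact hz0 hrw
        refine ⟨⟨⟨_, haM r⟩, ⟨⟨_, haM w⟩, mem_nonZeroDivisors_of_ne_zero ?_⟩⟩, ?_⟩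
        · intro h5
          exact hw0 (Subtype.ext_iff.mp h5)
        · apply Subtype.ext
          show (z : FX) * (aeval (Subtype.val : s → FX) w) = aeval (Subtype.val : s → FX) r
          rw [hrw, div_mul_cancel₀ _ hw0]
    · have h1 := Subtype.ext_iff.mp h
      have h2 : x = y := Subtype.ext h1
      exact ⟨1, by rw [h2]⟩
  haveI : Algebra.IsAlgebraic L FX := Algebra.IsSeparable.isAlgebraic L FX
  exact htr ((IsFractionRing.isAlgebraic_iff (Algebra.adjoin F s) L FX).mpr
    (Algebra.IsAlgebraic.isAlgebraic u))

end Aux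

/-- Let `F` be a field of characteristic `p > 0`.
(1) If `f ∈ F[T₁,…,T_κ]` is a nonconstant polynomial all of whose exponent vectors
are divisible by `p` and all ratios of whose nonzero coefficients lie in `F^p`, then
`f = c·g^p` for some `c ∈ F^*` and some nonconstant `g`; in particular `f` is
reducible (not irreducible).
(2) Consequently, if `X` is a geometrically nonreduced integral affine hypersurface
over `F` (defined by an irreducible `f`, with function field `F(X)` the fraction
field of `F[T₁,…,T_κ]/(f)`, geometric nonreducedness meaning that `F(X)` is not
separably generated over `F`), then `[N_F(X):F^p] > 1`, where
`N_F(X) = F^p(ratios of nonzero coefficients of f)`; here `F^p` is modelled by a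
field `k` mapping onto `F^p ⊆ F`. -/
theorem stmt_16 (p : ℕ) [Fact p.Prime] (F : Type*) [Field F] [CharP F p] :
    (∀ (κ : ℕ) (f : MvPolynomial (Fin κ) F),
      (¬ ∃ c : F, f = MvPolynomial.C c) →
      (∀ m ∈ f.support, ∀ i : Fin κ, p ∣ m i) →
      (∀ m₁ ∈ f.support, ∀ m₂ ∈ f.support, ∃ z : F,
          f.coeff m₁ / f.coeff m₂ = z ^ p) →
      (∃ (c : F) (g : MvPolynomial (Fin κ) F), c ≠ 0 ∧
          (¬ ∃ c' : F, g = MvPolynomial.C c') ∧ f = MvPolynomial.C c * g ^ p) ∧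
        ¬ Irreducible f) ∧
    (∀ (κ : ℕ) (f : MvPolynomial (Fin κ) F) (FX : Type*) [Field FX] [Algebra F FX]
        [Algebra (MvPolynomial (Fin κ) F ⧸ Ideal.span {f}) FX]
        [IsScalarTower F (MvPolynomial (Fin κ) F ⧸ Ideal.span {f}) FX]
        [IsFractionRing (MvPolynomial (Fin κ) F ⧸ Ideal.span {f}) FX],
      Irreducible f →
      ¬ IsSeparablyGenerated F FX →
      ∀ (k : Type*) [Field k] [Algebra k F],
        (∀ x : F, (∃ y : k, algebraMap k F y = x) ↔ (∃ z : F, z ^ p = x)) →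
        1 < Module.finrank k
          (IntermediateField.adjoin k
            {x : F | ∃ m₁ ∈ f.support, ∃ m₂ ∈ f.support,
              x = f.coeff m₁ / f.coeff m₂})) := by
  constructor
  · intro κ f h1 h2 h3
    exact part1_aux p f h1 h2 h3
  · intro κ f FX _ _ _ _ _ hirr hnsep k _ _ hk
    by_contra hle
    have hdvd : ∀ m ∈ f.support, ∀ i : Fin κ, p ∣ m i := by
      by_contra hnd
      push_neg at hnd
      obtain ⟨m, hm, i₀, hpi⟩ := hnd
      exact hnsep (sepgen p f FX hirr i₀ m hm hpi)
    set S : Set F := {x : F | ∃ m₁ ∈ f.support, ∃ m₂ ∈ f.support,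
      x = f.coeff m₁ / f.coeff m₂} with hS_def
    have hSfin : S.Finite := by
      apply Set.Finite.subset (Set.Finite.image
        (f := fun mm : (Fin κ →₀ ℕ) × (Fin κ →₀ ℕ) => f.coeff mm.1 / f.coeff mm.2)
        (Set.toFinite (↑(f.support ×ˢ f.support) : Set _)))
      rintro x ⟨m₁, h₁, m₂, h₂, rfl⟩
      exact ⟨(m₁, m₂), by simp [h₁, h₂], rfl⟩
    haveI := hSfin.to_subtype
    have hint : ∀ x ∈ S, IsIntegral k x := by
      intro x _
      obtain ⟨y, hy⟩ := (hk (x ^ p)).mpr ⟨x, rfl⟩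
      refine ⟨Polynomial.X ^ p - Polynomial.C y,
        Polynomial.monic_X_pow_sub_C y (Fact.out : p.Prime).ne_zero, ?_⟩
      simp [hy]
    haveI : FiniteDimensional k (IntermediateField.adjoin k S) :=
      IntermediateField.finiteDimensional_adjoin hint
    have h1le : 0 < Module.finrank k (IntermediateField.adjoin k S) := Module.finrank_pos
    have heq1 : Module.finrank k (IntermediateField.adjoin k S) = 1 := by omega
    have hbot : IntermediateField.adjoin k S = ⊥ :=
      IntermediateField.finrank_eq_one_iff.mp heq1
    have hrat : ∀ m₁ ∈ f.support, ∀ m₂ ∈ f.support, ∃ z : F,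
        f.coeff m₁ / f.coeff m₂ = z ^ p := by
      intro m₁ h₁ m₂ h₂
      have hx : f.coeff m₁ / f.coeff m₂ ∈ IntermediateField.adjoin k S :=
        IntermediateField.subset_adjoin k S ⟨m₁, h₁, m₂, h₂, rfl⟩
      rw [hbot, IntermediateField.mem_bot] at hx
      obtain ⟨z, hz⟩ := (hk _).mp hx
      exact ⟨z, hz.symm⟩
    have hnc : ¬ ∃ c : F, f = MvPolynomial.C c := by
      rintro ⟨c, rfl⟩
      rcases eq_or_ne c 0 with rfl | hc
      · rw [map_zero] at hirr
        exact not_irreducible_zero hirr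
      · exact hirr.not_isUnit (hc.isUnit.map MvPolynomial.C)
    exact (part1_aux p f hnc hdvd hrat).2 hirr
end
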